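/- Let D=(V,A) be a connected digraph with integral capacities c_l ≤ c_u and cycle-value vector Δ such that the set B of Δ-bonds is nonempty and has no rigid edges (no arc a with x(a)=y(a) for all Δ-bonds x,y). Fix v_0 ∈ V. If x, y ∈ B and y is obtained from x by one legal push at a set U ⊆ V with v_0 ∉ U, then y can be obtained from x by a sequence of legal pushes at single vertices v ∈ U (each intermediate state a Δ-bond), one push per vertex of U. -/

import Mathlib

structure ClosedWalk (V A : Type*) (src tgt : A → V) where
  len : ℕ
  arcs : ℕ → A
  dir : ℕ → Bool
  verts : ℕ → V
  closed : verts 0 = verts len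
  compat : ∀ i, i < len →
    (dir i = true → src (arcs i) = verts i ∧ tgt (arcs i) = verts (i + 1)) ∧
    (dir i = false → tgt (arcs i) = verts i ∧ src (arcs i) = verts (i + 1))

def ClosedWalk.delta {V A : Type*} {src tgt : A → V}
    (C : ClosedWalk V A src tgt) (x : A → ℤ) : ℤ :=
  ∑ i ∈ Finset.range C.len, (if C.dir i then x (C.arcs i) else - x (C.arcs i))

def IsDeltaBond {V A : Type*} (src tgt : A → V) (cl cu : A → ℤ)
    (Δ : ClosedWalk V A src tgt → ℤ) (x : A → ℤ) : Prop :=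
  (∀ a : A, cl a ≤ x a ∧ x a ≤ cu a) ∧
  (∀ C : ClosedWalk V A src tgt, C.delta x = Δ C)

def pushSet {V A : Type*} (src tgt : A → V) (U : V → Prop) [DecidablePred U]
    (x : A → ℤ) : A → ℤ :=
  fun a => x a + (if U (src a) ∧ ¬ U (tgt a) then 1 else 0)
               - (if U (tgt a) ∧ ¬ U (src a) then 1 else 0)

lemma pushSet_apply {V A : Type*} (src tgt : A → V) (S : V → Prop) [DecidablePred S]
    (x : A → ℤ) (a : A) :
    pushSet src tgt S x a
      = x a + ((if S (src a) then 1 else 0) - (if S (tgt a) then 1 else 0)) := by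
  unfold pushSet
  by_cases h1 : S (src a) <;> by_cases h2 : S (tgt a) <;> simp [h1, h2] <;> ring

lemma delta_pushSet {V A : Type*} {src tgt : A → V}
    (C : ClosedWalk V A src tgt) (S : V → Prop) [DecidablePred S] (x : A → ℤ) :
    C.delta (pushSet src tgt S x) = C.delta x := by
  unfold ClosedWalk.delta
  have key : ∀ i ∈ Finset.range C.len,
      (if C.dir i then pushSet src tgt S x (C.arcs i) else - pushSet src tgt S x (C.arcs i))
      = (if C.dir i then x (C.arcs i) else - x (C.arcs i))
        + ((if S (C.verts i) then (1:ℤ) else 0) - (if S (C.verts (i+1)) then 1 else 0)) := by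
    intro i hi
    rw [Finset.mem_range] at hi
    have h := C.compat i hi
    cases hd : C.dir i
    · obtain ⟨h1, h2⟩ := h.2 hd
      simp only [hd, Bool.false_eq_true, if_false, pushSet_apply, h1, h2]
      ring
    · obtain ⟨h1, h2⟩ := h.1 hd
      simp only [hd, if_true, pushSet_apply, h1, h2]
  rw [Finset.sum_congr rfl key, Finset.sum_add_distrib, Finset.sum_range_sub']
  rw [C.closed]
  ring

lemma pushSet_erase {V A : Type} [DecidableEq V] (src tgt : A → V) (U : Finset V)
    (m : V) (hm : m ∈ U) (x : A → ℤ) :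
    pushSet src tgt (· ∈ U.erase m) (pushSet src tgt (· = m) x)
      = pushSet src tgt (· ∈ U) x := by
  funext a
  rw [pushSet_apply, pushSet_apply, pushSet_apply]
  by_cases h1 : src a = m <;> by_cases h2 : tgt a = m <;>
    by_cases h3 : src a ∈ U <;> by_cases h4 : tgt a ∈ U <;>
    simp [h1, h2, h3, h4, Finset.mem_erase, hm] <;> ring

lemma no_tight_cycle {V A : Type} (src tgt : A → V) (cl cu : A → ℤ)
    (Δ : ClosedWalk V A src tgt → ℤ)
    (hnorigid : ∀ a : A, ∃ y z : A → ℤ, IsDeltaBond src tgt cl cu Δ y ∧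
      IsDeltaBond src tgt cl cu Δ z ∧ y a ≠ z a)
    (x : A → ℤ) (hx : IsDeltaBond src tgt cl cu Δ x)
    (R : V → V → Prop)
    (hR : ∀ v w, R v w → ∃ a, (x a = cu a ∧ tgt a = v ∧ src a = w) ∨
      (x a = cl a ∧ src a = v ∧ tgt a = w)) :
    Irreflexive (Relation.TransGen R) := by
  intro v hv
  obtain ⟨w, hvw, hwv⟩ := Relation.TransGen.head'_iff.mp hv
  obtain ⟨l0, hchain0, hlast0⟩ := List.exists_isChain_cons_of_relationReflTransGen hwv
  set n : ℕ := (w :: l0).length with hndef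
  have hn : 0 < n := by simp [hndef]
  set verts : ℕ → V := fun i => (v :: w :: l0).getD i v with hverts
  have hchain : List.Chain' R (v :: w :: l0) := List.IsChain.cons_cons hvw hchain0
  have hstep : ∀ i, i < n → R (verts i) (verts (i + 1)) := by
    intro i hi
    have hlen : (v :: w :: l0).length = n + 1 := rfl
    have h := List.isChain_iff_getElem.mp hchain i (by omega)
    have e1 : verts i = (v :: w :: l0).get ⟨i, by omega⟩ := by
      simp only [hverts]; exact List.getD_eq_getElem _ _ _
    have e2 : verts (i + 1) = (v :: w :: l0).get ⟨i + 1, by omega⟩ := by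
      simp only [hverts]; exact List.getD_eq_getElem _ _ _
    rw [e1, e2]
    exact h
  have hclosed : verts 0 = verts n := by
    have hlen : (v :: w :: l0).length = n + 1 := rfl
    have h1 : verts 0 = v := rfl
    have e : verts n = (v :: w :: l0).get ⟨n, by omega⟩ := by
      simp only [hverts]; exact List.getD_eq_getElem _ _ _
    have e2 : (v :: w :: l0).getLast (by simp)
        = (v :: w :: l0).get ⟨(v :: w :: l0).length - 1, by omega⟩ :=
      List.getLast_eq_getElem _
    have e3 : (v :: w :: l0).getLast (by simp) = v := by
      rw [List.getLast_cons (by simp)]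
      exact hlast0
    have e4 : ((⟨n, by omega⟩ : Fin (v :: w :: l0).length))
        = ⟨(v :: w :: l0).length - 1, by omega⟩ := by
      apply Fin.ext
      simp [hlen]
    rw [h1, e, e4, ← e2, e3]
  have hstep2 : ∀ i, i < n → ∃ q : A × Bool,
      ((q.2 = true → src q.1 = verts i ∧ tgt q.1 = verts (i + 1)) ∧
       (q.2 = false → tgt q.1 = verts i ∧ src q.1 = verts (i + 1))) ∧
      ∀ z : A → ℤ, IsDeltaBond src tgt cl cu Δ z →
        (if q.2 then x q.1 else - x q.1) ≤ (if q.2 then z q.1 else - z q.1) := by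
    intro i hi
    obtain ⟨a, ha | ha⟩ := hR _ _ (hstep i hi)
    · refine ⟨(a, false), ⟨fun h => by simp at h, fun _ => ⟨ha.2.1, ha.2.2⟩⟩, ?_⟩
      intro z hz
      simp only [Bool.false_eq_true, if_false]
      have := (hz.1 a).2
      omega
    · refine ⟨(a, true), ⟨fun _ => ⟨ha.2.1, ha.2.2⟩, fun h => by simp at h⟩, ?_⟩
      intro z hz
      simp only [if_true]
      have := (hz.1 a).1
      omega
  choose q hq1 hq2 using hstep2
  set F : ℕ → A × Bool := fun i => if h : i < n then q i h else q 0 hn with hF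
  have hFlt : ∀ i (h : i < n), F i = q i h := fun i h => dif_pos h
  set C : ClosedWalk V A src tgt :=
    { len := n, arcs := fun i => (F i).1, dir := fun i => (F i).2, verts := verts,
      closed := hclosed,
      compat := by
        intro i hi
        simp only [hF, dif_pos hi]
        exact hq1 i hi } with hC
  have harcs0 : C.arcs 0 = (q 0 hn).1 := by simp [hC, hF, dif_pos hn]
  have key : ∀ z : A → ℤ, IsDeltaBond src tgt cl cu Δ z → z (C.arcs 0) = x (C.arcs 0) := by
    intro z hz
    have hle : ∀ i ∈ Finset.range C.len,
        (if C.dir i then x (C.arcs i) else - x (C.arcs i))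
          ≤ (if C.dir i then z (C.arcs i) else - z (C.arcs i)) := by
      intro i hi
      rw [Finset.mem_range] at hi
      have := hq2 i hi z hz
      simpa [hC, hF, dif_pos (show i < n from hi)] using this
    have hsum : C.delta x = C.delta z := by rw [hx.2, hz.2]
    have heq := (Finset.sum_eq_sum_iff_of_le hle).mp hsum 0 (by simpa [hC] using hn)
    split_ifs at heq <;> omega
  obtain ⟨y, z, hy, hz, hne⟩ := hnorigid (C.arcs 0)
  exact hne ((key y hy).trans (key z hz).symm)

/-- In a connected digraph with reduced data (no rigid arcs), a legal push at
a set `U` not containing the forbidden vertex `v₀` decomposes into a sequence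
of legal single-vertex pushes, one for each vertex of `U`, with every
intermediate state a Δ-bond. -/
theorem stmt_13 {V A : Type} [Fintype V] [Fintype A] [DecidableEq V]
    (src tgt : A → V) (cl cu : A → ℤ) (Δ : ClosedWalk V A src tgt → ℤ)
    (hconn : ∀ u w : V, Relation.ReflTransGen
      (fun p q => ∃ a : A, (src a = p ∧ tgt a = q) ∨ (src a = q ∧ tgt a = p)) u w)
    (hnorigid : ∀ a : A, ∃ y z : A → ℤ, IsDeltaBond src tgt cl cu Δ y ∧
      IsDeltaBond src tgt cl cu Δ z ∧ y a ≠ z a)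
    (v₀ : V) (U : Finset V) (hv₀ : v₀ ∉ U)
    (x : A → ℤ) (hx : IsDeltaBond src tgt cl cu Δ x)
    (hy : IsDeltaBond src tgt cl cu Δ (pushSet src tgt (· ∈ U) x)) :
    ∃ l : List V, l.Nodup ∧ l.toFinset = U ∧
      (∀ i, i ≤ l.length → IsDeltaBond src tgt cl cu Δ
        (List.foldl (fun z v => pushSet src tgt (· = v) z) x (l.take i))) ∧
      List.foldl (fun z v => pushSet src tgt (· = v) z) x l
        = pushSet src tgt (· ∈ U) x := by
  clear hconn hv₀
  induction U using Finset.strongInductionOn generalizing x with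
  | _ U IH =>
    rcases U.eq_empty_or_nonempty with rfl | hne
    · have hid : pushSet src tgt (· ∈ (∅ : Finset V)) x = x := by
        funext a; simp [pushSet]
      exact ⟨[], by simp, by simp, fun i _ => by simpa using hx, by simp [hid]⟩
    · -- the precedence relation
      set R : V → V → Prop := fun p q => p ∈ U ∧ q ∈ U ∧
        (∃ a, (x a = cu a ∧ tgt a = p ∧ src a = q) ∨
          (x a = cl a ∧ src a = p ∧ tgt a = q)) with hRdef
      have hirr : Irreflexive (Relation.TransGen R) :=
        no_tight_cycle src tgt cl cu Δ hnorigid x hx R (fun p q h => h.2.2)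
      have wf : WellFounded (Relation.TransGen R) := by
        have h1 : IsIrrefl V (Relation.TransGen R) := ⟨hirr⟩
        have h2 : IsTrans V (Relation.TransGen R) := ⟨fun a b c => Relation.TransGen.trans⟩
        exact Finite.wellFounded_of_trans_of_irrefl _
      obtain ⟨m, hmU, hmin⟩ := wf.has_min (↑U) (by exact_mod_cast hne)
      rw [Finset.mem_coe] at hmU
      have hminR : ∀ p, ¬ R p m := by
        intro p hp
        exact hmin p (Finset.mem_coe.mpr hp.1) (Relation.TransGen.single hp)
      set x' : A → ℤ := pushSet src tgt (· = m) x with hx'def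
      have hx' : IsDeltaBond src tgt cl cu Δ x' := by
        constructor
        · intro a
          have hb := hx.1 a
          have hyb := hy.1 a
          rw [pushSet_apply] at hyb
          rw [hx'def, pushSet_apply]
          by_cases h1 : src a = m <;> by_cases h2 : tgt a = m
          · have e : (if m = m then (1:ℤ) else 0) = 1 := if_pos rfl
            rw [h1, h2, e]
            omega
          · simp only [h1, if_pos rfl, if_neg h2]
            by_cases h4 : tgt a ∈ U
            · have hne2 : x a ≠ cu a := by
                intro hcu
                exact hminR (tgt a) ⟨h4, hmU, a, Or.inl ⟨hcu, rfl, h1⟩⟩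
              omega
            · rw [h1, if_pos hmU, if_neg h4] at hyb
              omega
          · simp only [h2, if_pos rfl, if_neg h1]
            by_cases h3 : src a ∈ U
            · have hne2 : x a ≠ cl a := by
                intro hcl
                exact hminR (src a) ⟨h3, hmU, a, Or.inr ⟨hcl, rfl, h2⟩⟩
              omega
            · rw [h2, if_pos hmU, if_neg h3] at hyb
              omega
          · simp only [if_neg h1, if_neg h2]
            omega
        · intro C
          rw [hx'def, delta_pushSet]
          exact hx.2 C
      have hy' : IsDeltaBond src tgt cl cu Δ (pushSet src tgt (· ∈ U.erase m) x') := by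
        rw [hx'def, pushSet_erase src tgt U m hmU]
        exact hy
      obtain ⟨l, hnd, hts, hbond, hfold⟩ := IH (U.erase m) (Finset.erase_ssubset hmU) x' hx' hy'
      refine ⟨m :: l, ?_, ?_, ?_, ?_⟩
      · refine List.nodup_cons.mpr ⟨?_, hnd⟩
        intro hmem
        have : m ∈ U.erase m := hts ▸ List.mem_toFinset.mpr hmem
        simp at this
      · rw [List.toFinset_cons, hts, Finset.insert_erase hmU]
      · intro i hi
        cases i with
        | zero => simpa using hx
        | succ j =>
          rw [List.take_succ_cons]
          simp only [List.foldl_cons]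
          exact hbond j (by simpa using hi)
      · simp only [List.foldl_cons]
        rw [hfold, hx'def, pushSet_erase src tgt U m hmU]
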